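/- Let S be the evolution semispray of a Lagrangian mechanical system, satisfying i_S ω_L = −dE_L + σ with ω_L the symplectic Cartan 2-form. Then S(E_L) = σ(S) = σ_i y^i. Consequently, along any integral curve of S the energy satisfies d/dt (E_L) = σ_i(x, dx/dt) · dx^i/dt, and the energy is non-increasing along evolution curves if and only if σ_i y^i ≤ 0 everywhere (i.e. the external force field is dissipative). -/

import Mathlib

/-- The phase space `TM` in local coordinates: points `(x, y)`. -/
abbrev TP (n : ℕ) := (Fin n → ℝ) × (Fin n → ℝ)

/-- Partial derivative with respect to the base coordinate `x^i`. -/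
noncomputable def pdx {n : ℕ} (i : Fin n) (f : TP n → ℝ) : TP n → ℝ :=
  fun p => fderiv ℝ f p (Pi.single i 1, 0)

/-- Partial derivative with respect to the fibre coordinate `y^i`. -/
noncomputable def pdy {n : ℕ} (i : Fin n) (f : TP n → ℝ) : TP n → ℝ :=
  fun p => fderiv ℝ f p (0, Pi.single i 1)

/-- The metric tensor `g_{ij} = (1/2) ∂²L/∂y^i∂y^j` of a Lagrangian. -/
noncomputable def metricT {n : ℕ} (L : TP n → ℝ) (p : TP n) (i j : Fin n) : ℝ :=
  (1/2) * pdy i (pdy j L) p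

/-- The Cartan 2-form `ω_L` of `L` evaluated at `p` on two tangent vectors. -/
noncomputable def cartanForm {n : ℕ} (L : TP n → ℝ) (p w₁ w₂ : TP n) : ℝ :=
  (∑ i, ∑ j, 2 * metricT L p i j * (w₁.2 j * w₂.1 i - w₂.2 j * w₁.1 i)) +
  ∑ i, ∑ j, (1/2) * (pdy i (pdx j L) p - pdx i (pdy j L) p) *
      (w₁.1 j * w₂.1 i - w₂.1 j * w₁.1 i)

/-- The energy `E_L = y^i ∂L/∂y^i − L` of a Lagrangian. -/
noncomputable def energy {n : ℕ} (L : TP n → ℝ) : TP n → ℝ :=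
  fun p => (∑ i, p.2 i * pdy i L p) - L p

/-- The force 1-form components `σ_i = g_{ij} V^j`. -/
noncomputable def forceForm {n : ℕ} (L : TP n → ℝ) (V : TP n → Fin n → ℝ) :
    TP n → Fin n → ℝ :=
  fun p i => ∑ j, metricT L p i j * V p j

/-- The lift of a curve `t ↦ x(t)` in `M` to the curve `t ↦ (x(t), dx/dt(t))` in `TM`. -/
noncomputable def velCurve {n : ℕ} (c : ℝ → Fin n → ℝ) : ℝ → TP n :=
  fun t => (c t, fun i => deriv (fun s => c s i) t)


section PeanoExistence
open Set Metric
open scoped NNReal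
set_option synthInstance.maxHeartbeats 1000000
set_option maxHeartbeats 1000000


lemma lip_approx_real {α : Type*} [MetricSpace α] {K : Set α} (hK : IsCompact K)
    {u : α → ℝ} (hu : ContinuousOn u K) {B : ℝ} (hB0 : 0 ≤ B) (hB : ∀ x ∈ K, |u x| ≤ B)
    {ε : ℝ} (hε : 0 < ε) :
    ∃ g : α → ℝ, (∃ C : NNReal, LipschitzWith C g) ∧ (∀ x, |g x| ≤ B) ∧
      ∀ x ∈ K, |g x - u x| ≤ ε := by
  rcases eq_empty_or_nonempty K with rfl | hne
  · exact ⟨fun _ => 0, ⟨0, LipschitzWith.const 0⟩, fun x => by simpa using hB0,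
      fun x hx => absurd hx (notMem_empty x)⟩
  have : Nonempty K := hne.to_subtype
  -- uniform continuity
  obtain ⟨δ, hδ0, hδ⟩ := Metric.uniformContinuousOn_iff.1
    (hK.uniformContinuousOn_of_continuous hu) ε hε
  set L : ℝ := (2 * B + ε) / δ with hL
  have hL0 : 0 ≤ L := by positivity
  set g₀ : α → ℝ := fun y => ⨅ x : K, (u x + L * dist y x) with hg₀
  have Bdd : ∀ y : α, BddBelow (range fun x : K => u x + L * dist y x) := fun y =>
    ⟨-B, by rintro w ⟨t, rfl⟩
            have h1 : -B ≤ u t := (abs_le.1 (hB t t.2)).1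
            have h2 : (0:ℝ) ≤ L * dist y (t : α) := mul_nonneg hL0 dist_nonneg
            dsimp only
            linarith⟩
  have hg₀lip : LipschitzWith ⟨L, hL0⟩ g₀ := by
    refine LipschitzWith.of_le_add_mul _ fun x y => ?_
    rw [← sub_le_iff_le_add]
    refine le_ciInf fun z => ?_
    rw [sub_le_iff_le_add]
    calc g₀ x ≤ u z + L * dist x z := ciInf_le (Bdd x) _
      _ ≤ u z + L * dist y z + L * dist x y := by
          have := dist_triangle x y (z : α)
          push_cast
          nlinarith
  have hle : ∀ x ∈ K, g₀ x ≤ u x := fun x hx => by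
    simpa using ciInf_le (Bdd x) ⟨x, hx⟩
  have hge : ∀ x ∈ K, u x - ε ≤ g₀ x := by
    intro x hx
    refine le_ciInf fun z => ?_
    rcases lt_or_ge (dist x (z : α)) δ with h | h
    · have : dist (u x) (u z) < ε := hδ x hx z z.2 h
      rw [Real.dist_eq] at this
      have := abs_lt.1 this
      nlinarith [dist_nonneg (x := x) (y := (z : α)), hL0]
    · have h1 : L * δ ≤ L * dist x (z : α) := by nlinarith
      have h2 : L * δ = 2 * B + ε := by
        rw [hL, div_mul_cancel₀ _ (ne_of_gt hδ0)]
      have h3 : -B ≤ u z := by cases abs_le.1 (hB z z.2); linarith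
      have h4 : u x ≤ B := (abs_le.1 (hB x hx)).2
      linarith
  refine ⟨fun y => max (-B) (min (g₀ y) B), ⟨⟨L, hL0⟩, (hg₀lip.min_const B).const_max (-B)⟩,
    fun x => ?_, fun x hx => ?_⟩
  · rw [abs_le]
    constructor
    · exact le_max_left _ _
    · exact max_le (by linarith) (min_le_right _ _)
  · have h4 := abs_le.1 (hB x hx)
    have h5 : min (g₀ x) B = g₀ x := min_eq_left ((hle x hx).trans h4.2)
    dsimp only; rw [h5, abs_le]
    constructor
    · have : u x - ε ≤ max (-B) (g₀ x) := le_max_of_le_right (hge x hx)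
      linarith
    · have : max (-B) (g₀ x) ≤ u x := max_le (by linarith [h4.1]) (hle x hx)
      linarith

lemma lip_approx_pi {ι : Type*} [Fintype ι] {K : Set (ι → ℝ)} (hK : IsCompact K)
    {f : (ι → ℝ) → (ι → ℝ)} (hf : ContinuousOn f K) {B : ℝ} (hB0 : 0 ≤ B)
    (hB : ∀ x ∈ K, ‖f x‖ ≤ B) {ε : ℝ} (hε : 0 < ε) :
    ∃ g : (ι → ℝ) → (ι → ℝ), (∃ C : NNReal, LipschitzWith C g) ∧ (∀ x, ‖g x‖ ≤ B) ∧
      ∀ x ∈ K, ‖g x - f x‖ ≤ ε := by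
  have hcomp : ∀ i, ∃ g : (ι → ℝ) → ℝ, (∃ C : NNReal, LipschitzWith C g) ∧ (∀ x, |g x| ≤ B) ∧
      ∀ x ∈ K, |g x - f x i| ≤ ε := by
    intro i
    refine lip_approx_real hK ((continuous_apply i).comp_continuousOn hf) hB0
      (fun x hx => ?_) hε
    calc |f x i| ≤ ‖f x‖ := by
            simpa [Real.norm_eq_abs] using norm_le_pi_norm (f x) i
      _ ≤ B := hB x hx
  choose g hlip hbd happ using hcomp
  choose C hC using hlip
  refine ⟨fun x i => g i x, ⟨Finset.univ.sup C, ?_⟩, fun x => ?_, fun x hx => ?_⟩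
  · refine LipschitzWith.of_dist_le_mul fun x y => ?_
    rw [dist_pi_le_iff (by positivity)]
    intro i
    calc dist (g i x) (g i y) ≤ C i * dist x y := (hC i).dist_le_mul x y
      _ ≤ (Finset.univ.sup C : ℝ≥0) * dist x y := by
          gcongr
          exact_mod_cast (Finset.le_sup (f := C) (Finset.mem_univ i))
  · rw [pi_norm_le_iff_of_nonneg hB0]
    intro i
    simpa [Real.norm_eq_abs] using hbd i x
  · rw [pi_norm_le_iff_of_nonneg hε.le]
    intro i
    simpa [Real.norm_eq_abs] using happ i x hx

open Filter Topology intervalIntegral MeasureTheory BoundedContinuousFunction in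
theorem peano_pi {ι : Type*} [Fintype ι] {f : (ι → ℝ) → (ι → ℝ)} {O : Set (ι → ℝ)}
    (hO : IsOpen O) {x₀ : ι → ℝ} (hx₀ : x₀ ∈ O) (hf : ContinuousOn f O) :
    ∃ ε > (0:ℝ), ∃ γ : ℝ → ι → ℝ, γ 0 = x₀ ∧
      ∀ t ∈ Ioo (-ε) ε, γ t ∈ O ∧ HasDerivAt γ (f (γ t)) t := by
  -- a compact ball inside O
  obtain ⟨r₀, hr₀, hball⟩ := Metric.isOpen_iff.1 hO x₀ hx₀
  set r := r₀ / 2 with hrdef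
  have hr : 0 < r := by positivity
  set K := closedBall x₀ r with hKdef
  have hKO : K ⊆ O := fun x hx => hball (mem_ball.2 (lt_of_le_of_lt (mem_closedBall.1 hx)
    (by rw [hrdef]; linarith)))
  have hKc : IsCompact K := isCompact_closedBall x₀ r
  have hx₀K : x₀ ∈ K := mem_closedBall_self hr.le
  have hfK : ContinuousOn f K := hf.mono hKO
  -- bound on f
  obtain ⟨M, hM⟩ := hKc.exists_bound_of_continuousOn hfK
  set B := max M 0 with hBdef
  have hB0 : 0 ≤ B := le_max_right _ _
  have hB : ∀ x ∈ K, ‖f x‖ ≤ B := fun x hx => (hM x hx).trans (le_max_left _ _)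
  set C : ℝ := B + 1 with hCdef
  have hC0 : 0 < C := by positivity
  set a := r / C with hadef
  have ha : 0 < a := by positivity
  -- Lipschitz approximations
  have happrox : ∀ k : ℕ, ∃ g : (ι → ℝ) → (ι → ℝ), (∃ Ck : NNReal, LipschitzWith Ck g) ∧
      (∀ x, ‖g x‖ ≤ B) ∧ ∀ x ∈ K, ‖g x - f x‖ ≤ 1 / (k + 1) := fun k =>
    lip_approx_pi hKc hfK hB0 hB (by positivity)
  choose g hglip hgbd hgapp using happrox
  choose Ck hCk using hglip
  -- Picard–Lindelöf for each approximation
  have hPL : ∀ k : ℕ, ∃ γ : ℝ → ι → ℝ, γ 0 = x₀ ∧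
      ∀ t ∈ Icc (-a) a, HasDerivWithinAt γ (g k (γ t)) (Icc (-a) a) t := by
    intro k
    have hpl : IsPicardLindelof (fun _ x => g k x) (tmin := -a) (tmax := a)
        ⟨0, by constructor <;> linarith⟩ x₀ ⟨r, hr.le⟩ 0 ⟨C, hC0.le⟩ (Ck k) :=
      { lipschitzOnWith := fun t _ => ((hCk k).lipschitzOnWith (s := closedBall x₀ r))
        continuousOn := fun x _ => continuousOn_const
        norm_le := fun t _ x _ => (hgbd k x).trans (by show B ≤ C; simp [hCdef])
        mul_max_le := by
          have : max (a - 0) (0 - -a) = a := by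
            rw [max_eq_left] <;> linarith
          show C * max (a - 0) (0 - -a) ≤ r - ((0:ℝ≥0):ℝ)
          rw [this, NNReal.coe_zero, sub_zero, hadef, mul_div_cancel₀ _ (ne_of_gt hC0)] }
    obtain ⟨γ, h0, hd⟩ := hpl.exists_eq_forall_mem_Icc_hasDerivWithinAt₀
    exact ⟨γ, h0, hd⟩
  choose γ hγ0 hγd using hPL
  -- the solutions stay in K and are C-Lipschitz on [-a, a]
  have hIccconv : Convex ℝ (Icc (-a : ℝ) a) := convex_Icc _ _
  have h0mem : (0:ℝ) ∈ Icc (-a : ℝ) a := by constructor <;> linarith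
  have hlipcurve : ∀ k, ∀ s ∈ Icc (-a : ℝ) a, ∀ t ∈ Icc (-a : ℝ) a,
      ‖γ k t - γ k s‖ ≤ C * ‖t - s‖ := by
    intro k s hs t ht
    refine Convex.norm_image_sub_le_of_norm_hasDerivWithin_le (f := γ k)
      (f' := fun t => g k (γ k t)) (hγd k) (fun x _ => (hgbd k _).trans (by simp [hCdef]))
      hIccconv hs ht
  have hmemK : ∀ k, ∀ t ∈ Icc (-a : ℝ) a, γ k t ∈ K := by
    intro k t ht
    have := hlipcurve k 0 h0mem t ht
    rw [hγ0 k] at this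
    rw [hKdef, mem_closedBall, dist_eq_norm]
    have h1 : ‖t - 0‖ ≤ a := by
      rw [sub_zero, Real.norm_eq_abs, abs_le]; exact ht
    calc ‖γ k t - x₀‖ ≤ C * ‖t - 0‖ := this
      _ ≤ C * a := by nlinarith [norm_nonneg (t - 0)]
      _ = r := by rw [hadef, mul_div_cancel₀ _ (ne_of_gt hC0)]
  -- integral equations for the approximations
  have hIooIcc : Ioo (-a:ℝ) a ⊆ Icc (-a) a := Ioo_subset_Icc_self
  have huIccsub : ∀ t ∈ Ioo (-a:ℝ) a, uIcc 0 t ⊆ Ioo (-a) a := by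
    intro t ht s hs
    rcases le_total 0 t with h | h
    · rw [uIcc_of_le h] at hs
      exact ⟨by linarith [hs.1, ht.1], by linarith [hs.2, ht.2]⟩
    · rw [uIcc_of_ge h] at hs
      exact ⟨by linarith [hs.1, ht.1], by linarith [hs.2, ht.2]⟩
  have hcurvecont : ∀ k, ContinuousOn (γ k) (Icc (-a) a) := fun k t ht =>
    (hγd k t ht).continuousWithinAt
  have hintk : ∀ k, ∀ t ∈ Ioo (-a:ℝ) a,
      IntervalIntegrable (fun s => g k (γ k s)) volume 0 t := by
    intro k t ht
    exact (((hCk k).continuous).comp_continuousOn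
      ((hcurvecont k).mono (fun s hs => hIooIcc (huIccsub t ht hs)))).intervalIntegrable
  have hIE : ∀ k, ∀ t ∈ Ioo (-a:ℝ) a, γ k t = x₀ + ∫ s in (0:ℝ)..t, g k (γ k s) := by
    intro k t ht
    have hderiv : ∀ s ∈ uIcc (0:ℝ) t, HasDerivAt (γ k) (g k (γ k s)) s := fun s hs =>
      (hγd k s (hIooIcc (huIccsub t ht hs))).hasDerivAt
        (Icc_mem_nhds (huIccsub t ht hs).1 (huIccsub t ht hs).2)
    have := intervalIntegral.integral_eq_sub_of_hasDerivAt hderiv (hintk k t ht)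
    rw [this, hγ0 k]
    abel
  -- Arzelà–Ascoli
  haveI : CompactSpace (Icc (-a:ℝ) a) := isCompact_iff_compactSpace.mp isCompact_Icc
  set Fb : ℕ → (Icc (-a:ℝ) a →ᵇ (ι → ℝ)) := fun k =>
    BoundedContinuousFunction.mkOfCompact ⟨(Icc (-a:ℝ) a).restrict (γ k),
      (hcurvecont k).restrict⟩ with hFbdef
  have hFbval : ∀ k x, Fb k x = γ k x := fun k x => rfl
  set A : Set (Icc (-a:ℝ) a →ᵇ (ι → ℝ)) := range Fb with hAdef
  have hins : ∀ (F : Icc (-a:ℝ) a →ᵇ (ι → ℝ)) (x), F ∈ A → F x ∈ K := by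
    rintro F x ⟨k, rfl⟩
    exact hmemK k x x.2
  have hequi : Equicontinuous ((↑) : A → (Icc (-a:ℝ) a) → (ι → ℝ)) := by
    apply equicontinuous_of_continuity_modulus (fun d => C * d)
    · simpa using (continuous_mul_left C).tendsto (0:ℝ)
    · rintro x y ⟨F, ⟨k, rfl⟩⟩
      show dist (γ k x) (γ k y) ≤ C * dist (x : ℝ) y
      rw [dist_eq_norm, dist_eq_norm]
      exact hlipcurve k y y.2 x x.2
  have hAA : IsCompact (closure A) := arzela_ascoli K hKc A hins hequi
  obtain ⟨F, hFA, φ, hφ, hFtend⟩ :=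
    hAA.tendsto_subseq (x := Fb) (fun k => subset_closure (mem_range_self k))
  have hdistF : Tendsto (fun k => dist (Fb (φ k)) F) atTop (𝓝 0) :=
    tendsto_iff_dist_tendsto_zero.1 hFtend
  have hptwise : ∀ x : Icc (-a:ℝ) a, Tendsto (fun k => γ (φ k) x) atTop (𝓝 (F x)) := by
    intro x
    refine tendsto_iff_dist_tendsto_zero.2 (squeeze_zero (fun k => dist_nonneg)
      (fun k => ?_) hdistF)
    exact BoundedContinuousFunction.dist_coe_le_dist (f := Fb (φ k)) (g := F) x
  have hFK : ∀ x, F x ∈ K := fun x =>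
    hKc.isClosed.mem_of_tendsto (hptwise x) (Eventually.of_forall fun k => hmemK _ x x.2)
  -- the limit curve
  set γω : ℝ → ι → ℝ := fun t => if h : t ∈ Icc (-a:ℝ) a then F ⟨t, h⟩ else x₀ with hγωdef
  have hγωeq : ∀ t (h : t ∈ Icc (-a:ℝ) a), γω t = F ⟨t, h⟩ := fun t h => dif_pos h
  have hγωcont : ContinuousOn γω (Icc (-a) a) := by
    rw [continuousOn_iff_continuous_restrict]
    have : (Icc (-a:ℝ) a).domRestrict γω = F := funext fun x => by
      rw [Set.domRestrict_apply, hγωeq x.1 x.2]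
    rw [this]
    exact F.continuous
  have hγωK : ∀ t ∈ Icc (-a:ℝ) a, γω t ∈ K := fun t h => by rw [hγωeq t h]; exact hFK _
  have hγω0 : γω 0 = x₀ := by
    rw [hγωeq 0 h0mem]
    refine tendsto_nhds_unique (hptwise ⟨0, h0mem⟩) ?_
    simpa [hγ0] using (tendsto_const_nhds : Tendsto (fun _ : ℕ => x₀) atTop (𝓝 x₀))
  have hcontω : ContinuousOn (fun s => f (γω s)) (Icc (-a) a) :=
    hfK.comp hγωcont (fun s hs => hγωK s hs)
  have hintω : ∀ t ∈ Ioo (-a:ℝ) a, IntervalIntegrable (fun s => f (γω s)) volume 0 t :=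
    fun t ht => (hcontω.mono (fun s hs => hIooIcc (huIccsub t ht hs))).intervalIntegrable
  -- limit of the integral equations
  have hIEω : ∀ t ∈ Ioo (-a:ℝ) a, γω t = x₀ + ∫ s in (0:ℝ)..t, f (γω s) := by
    intro t ht
    have htendL : Tendsto (fun k => γ (φ k) t) atTop (𝓝 (γω t)) := by
      rw [hγωeq t (hIooIcc ht)]
      exact hptwise ⟨t, hIooIcc ht⟩
    have htendR : Tendsto (fun k => ∫ s in (0:ℝ)..t, g (φ k) (γ (φ k) s)) atTop
        (𝓝 (∫ s in (0:ℝ)..t, f (γω s))) := by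
      rw [Metric.tendsto_atTop]
      intro ε' hε'
      set ε₂ := ε' / (2 * (a + 1)) with hε₂def
      have hε₂ : 0 < ε₂ := by positivity
      obtain ⟨δ, hδ0, hδ⟩ := Metric.uniformContinuousOn_iff.1
        (hKc.uniformContinuousOn_of_continuous hfK) ε₂ hε₂
      obtain ⟨N₁, hN₁⟩ := (Metric.tendsto_atTop.1 hdistF) δ hδ0
      obtain ⟨N₂, hN₂⟩ := exists_nat_one_div_lt hε₂
      refine ⟨max N₁ N₂, fun k hk => ?_⟩
      have hk₁ : N₁ ≤ k := le_trans (le_max_left _ _) hk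
      have hk₂ : N₂ ≤ k := le_trans (le_max_right _ _) hk
      have hdistFk : dist (Fb (φ k)) F < δ := by
        have := hN₁ k hk₁
        rwa [Real.dist_eq, sub_zero, abs_of_nonneg dist_nonneg] at this
      have key : ∀ s ∈ uIcc (0:ℝ) t, ‖g (φ k) (γ (φ k) s) - f (γω s)‖ ≤ ε₂ + ε₂ := by
        intro s hs
        have hsIcc : s ∈ Icc (-a:ℝ) a := hIooIcc (huIccsub t ht hs)
        have hsK : γ (φ k) s ∈ K := hmemK (φ k) s hsIcc
        have hsKω : γω s ∈ K := hγωK s hsIcc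
        have h1 : ‖g (φ k) (γ (φ k) s) - f (γ (φ k) s)‖ ≤ ε₂ := by
          refine (hgapp (φ k) _ hsK).trans ?_
          have hφk : (k:ℝ) + 1 ≤ (φ k : ℝ) + 1 := by
            exact_mod_cast Nat.succ_le_succ hφ.le_apply
          have h2 : (1:ℝ) / ((φ k : ℝ) + 1) ≤ 1 / ((k:ℝ) + 1) :=
            one_div_le_one_div_of_le (by positivity) hφk
          have h3 : (1:ℝ) / ((k:ℝ) + 1) ≤ 1 / ((N₂:ℝ) + 1) :=
            one_div_le_one_div_of_le (by positivity) (by exact_mod_cast Nat.succ_le_succ hk₂)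
          linarith [hN₂]
        have h4 : ‖f (γ (φ k) s) - f (γω s)‖ ≤ ε₂ := by
          have hd : dist (γ (φ k) s) (γω s) < δ := by
            rw [hγωeq s hsIcc]
            exact lt_of_le_of_lt
              (BoundedContinuousFunction.dist_coe_le_dist (f := Fb (φ k)) (g := F) ⟨s, hsIcc⟩)
              hdistFk
          have := hδ _ hsK _ hsKω hd
          rw [dist_eq_norm] at this
          exact this.le
        calc ‖g (φ k) (γ (φ k) s) - f (γω s)‖
            ≤ ‖g (φ k) (γ (φ k) s) - f (γ (φ k) s)‖ + ‖f (γ (φ k) s) - f (γω s)‖ := by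
              have : g (φ k) (γ (φ k) s) - f (γω s) =
                  (g (φ k) (γ (φ k) s) - f (γ (φ k) s)) + (f (γ (φ k) s) - f (γω s)) := by abel
              rw [this]
              exact norm_add_le _ _
          _ ≤ ε₂ + ε₂ := add_le_add h1 h4
      have hest : dist (∫ s in (0:ℝ)..t, g (φ k) (γ (φ k) s)) (∫ s in (0:ℝ)..t, f (γω s))
          ≤ (ε₂ + ε₂) * |t - 0| := by
        rw [dist_eq_norm, ← intervalIntegral.integral_sub (hintk (φ k) t ht) (hintω t ht)]
        exact intervalIntegral.norm_integral_le_of_norm_le_const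
          (fun s hs => key s (uIoc_subset_uIcc hs))
      have habs : |t - 0| ≤ a := by
        rw [sub_zero, abs_le]
        exact ⟨ht.1.le, ht.2.le⟩
      calc dist (∫ s in (0:ℝ)..t, g (φ k) (γ (φ k) s)) (∫ s in (0:ℝ)..t, f (γω s))
          ≤ (ε₂ + ε₂) * |t - 0| := hest
        _ ≤ (ε₂ + ε₂) * a := by nlinarith
        _ < ε' := by
            rw [hε₂def]
            rw [← add_div, div_mul_eq_mul_div, div_lt_iff₀ (by positivity)]
            nlinarith
    refine tendsto_nhds_unique htendL ?_
    exact ((tendsto_const_nhds.add htendR).congr (fun k => (hIE (φ k) t ht).symm))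
  -- conclusion
  refine ⟨a, ha, γω, hγω0, fun t ht => ⟨hKO (hγωK t (hIooIcc ht)), ?_⟩⟩
  have hG : ContinuousAt (fun s => f (γω s)) t :=
    hcontω.continuousAt (Icc_mem_nhds ht.1 ht.2)
  have hmeas : StronglyMeasurableAtFilter (fun s => f (γω s)) (𝓝 t) :=
    (hcontω.mono hIooIcc).stronglyMeasurableAtFilter isOpen_Ioo t ht
  have hD : HasDerivAt (fun u => x₀ + ∫ s in (0:ℝ)..u, f (γω s)) (f (γω t)) t :=
    (intervalIntegral.integral_hasDerivAt_right (hintω t ht) hmeas hG).const_add x₀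
  refine hD.congr_of_eventuallyEq ?_
  filter_upwards [Ioo_mem_nhds ht.1 ht.2] with s hs
  exact hIEω s hs

theorem peano_TP {n : ℕ} {W : TP n → TP n} {O : Set (TP n)} (hO : IsOpen O) {p₀ : TP n}
    (hp₀ : p₀ ∈ O) (hW : ContinuousOn W O) :
    ∃ ε > (0:ℝ), ∃ γ : ℝ → TP n, γ 0 = p₀ ∧
      ∀ t ∈ Ioo (-ε) ε, γ t ∈ O ∧ HasDerivAt γ (W (γ t)) t := by
  let e : TP n ≃L[ℝ] (Fin n ⊕ Fin n → ℝ) :=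
    (LinearEquiv.sumArrowLequivProdArrow (Fin n) (Fin n) ℝ ℝ).symm.toContinuousLinearEquiv
  have hO' : IsOpen ((e.symm : (Fin n ⊕ Fin n → ℝ) → TP n) ⁻¹' O) :=
    hO.preimage e.symm.continuous
  have hx₀' : e p₀ ∈ (e.symm : (Fin n ⊕ Fin n → ℝ) → TP n) ⁻¹' O := by
    simp [hp₀]
  have hf' : ContinuousOn (fun x => e (W (e.symm x)))
      ((e.symm : (Fin n ⊕ Fin n → ℝ) → TP n) ⁻¹' O) := by
    refine e.continuous.comp_continuousOn ?_
    exact hW.comp e.symm.continuous.continuousOn (fun x hx => hx)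
  obtain ⟨ε, hε, γ', hγ'0, hγ'⟩ := peano_pi hO' hx₀' hf'
  refine ⟨ε, hε, fun t => e.symm (γ' t), by show e.symm (γ' 0) = p₀; rw [hγ'0]; simp, fun t ht => ?_⟩
  obtain ⟨hmem, hd⟩ := hγ' t ht
  refine ⟨hmem, ?_⟩
  have := (e.symm.toContinuousLinearMap.hasFDerivAt (x := γ' t)).comp_hasDerivAt t hd
  simp at this; exact this

end PeanoExistence

section MainHelpers
open Set

lemma tp_isOpen_ne (n : ℕ) : IsOpen {p : TP n | p.2 ≠ 0} :=
  IsOpen.preimage continuous_snd isOpen_ne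

lemma energy_differentiableAt {n : ℕ} (L : TP n → ℝ)
    (hL : ContDiffOn ℝ (⊤ : ℕ∞) L {p : TP n | p.2 ≠ 0}) (p : TP n) (hp : p.2 ≠ 0) :
    DifferentiableAt ℝ (energy L) p := by
  have hLat : ContDiffAt ℝ (⊤ : ℕ∞) L p := hL.contDiffAt ((tp_isOpen_ne n).mem_nhds hp)
  have hfd : ContDiffAt ℝ (⊤ : ℕ∞) (fderiv ℝ L) p :=
    hLat.fderiv_right (m := (⊤ : ℕ∞)) (by exact_mod_cast le_top)
  have hpdy : ∀ i, DifferentiableAt ℝ (pdy i L) p := by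
    intro i
    exact ((ContinuousLinearMap.apply ℝ ℝ ((0, Pi.single i 1) : TP n)
      ).differentiable.differentiableAt).comp p (hfd.differentiableAt (by simp))
  have h1 : DifferentiableAt ℝ (fun q : TP n => ∑ i, q.2 i * pdy i L q) p := by
    apply DifferentiableAt.fun_sum
    intro i _
    exact (((ContinuousLinearMap.proj i).comp
      (ContinuousLinearMap.snd ℝ (Fin n → ℝ) (Fin n → ℝ))).differentiable.differentiableAt).mul
      (hpdy i)
  exact h1.sub (hLat.differentiableAt (by simp))

lemma cartanForm_self {n : ℕ} (L : TP n → ℝ) (p w : TP n) : cartanForm L p w w = 0 := by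
  simp [cartanForm]

open Filter Topology in
lemma deriv_nonpos_of_antitoneOn {g : ℝ → ℝ} {a b t d : ℝ} (ht : t ∈ Ioo a b)
    (hg : AntitoneOn g (Ioo a b)) (hd : HasDerivAt g d t) : d ≤ 0 := by
  have h1 : Tendsto (slope g t) (𝓝[>] t) (𝓝 d) :=
    (hasDerivAt_iff_tendsto_slope.1 hd).mono_left
      (nhdsWithin_mono t (fun s hs => ne_of_gt hs))
  refine le_of_tendsto h1 ?_
  filter_upwards [Ioo_mem_nhdsGT_of_mem ⟨le_refl t, ht.2⟩] with s hs
  have : g s ≤ g t := hg ht ⟨ht.1.trans hs.1, hs.2⟩ hs.1.le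
  rw [slope_def_field]
  exact div_nonpos_of_nonpos_of_nonneg (by linarith) (by linarith [hs.1])

end MainHelpers

/-- for the evolution semispray `S` (with `i_S ω_L = −dE_L + σ`):
`S(E_L) = σ(S) = σ_i y^i`; along any integral curve of `S` the energy satisfies
`d/dt E_L = σ_i(x, dx/dt) dx^i/dt`; and the energy is non-increasing along all
evolution curves iff `σ_i y^i ≤ 0` everywhere (the force field is dissipative). -/
theorem stmt3 {n : ℕ} (L : TP n → ℝ) (V : TP n → Fin n → ℝ) (S : TP n → TP n)
    (hL : ContDiffOn ℝ (⊤ : ℕ∞) L {p : TP n | p.2 ≠ 0})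
    (hreg : ∀ p : TP n, p.2 ≠ 0 →
      IsUnit (Matrix.of fun i j : Fin n => metricT L p i j))
    (hScont : ContinuousOn S {p : TP n | p.2 ≠ 0})
    (hSspray : ∀ p : TP n, (S p).1 = p.2)
    (hS : ∀ p : TP n, p.2 ≠ 0 → ∀ w : TP n,
      cartanForm L p (S p) w = - fderiv ℝ (energy L) p w + ∑ i, forceForm L V p i * w.1 i) :
    (∀ p : TP n, p.2 ≠ 0 →
      fderiv ℝ (energy L) p (S p) = ∑ i, forceForm L V p i * p.2 i) ∧
    (∀ (a b : ℝ) (c : ℝ → Fin n → ℝ),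
      (∀ t ∈ Set.Ioo a b, (velCurve c t).2 ≠ 0 ∧ HasDerivAt (velCurve c) (S (velCurve c t)) t) →
      ∀ t ∈ Set.Ioo a b,
        HasDerivAt (fun s => energy L (velCurve c s))
          (∑ i, forceForm L V (velCurve c t) i * deriv (fun s => c s i) t) t) ∧
    ((∀ (a b : ℝ) (c : ℝ → Fin n → ℝ),
      (∀ t ∈ Set.Ioo a b, (velCurve c t).2 ≠ 0 ∧ HasDerivAt (velCurve c) (S (velCurve c t)) t) →
      AntitoneOn (fun s => energy L (velCurve c s)) (Set.Ioo a b)) ↔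
      (∀ p : TP n, p.2 ≠ 0 → ∑ i, forceForm L V p i * p.2 i ≤ 0)) := by
  have hopen := tp_isOpen_ne n
  have hE : ∀ p : TP n, p.2 ≠ 0 → DifferentiableAt ℝ (energy L) p := energy_differentiableAt L hL
  have part1 : ∀ p : TP n, p.2 ≠ 0 →
      fderiv ℝ (energy L) p (S p) = ∑ i, forceForm L V p i * p.2 i := by
    intro p hp
    have h := hS p hp (S p)
    rw [cartanForm_self, hSspray p] at h
    linarith
  have part2 : ∀ (a b : ℝ) (c : ℝ → Fin n → ℝ),
      (∀ t ∈ Set.Ioo a b,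
        (velCurve c t).2 ≠ 0 ∧ HasDerivAt (velCurve c) (S (velCurve c t)) t) →
      ∀ t ∈ Set.Ioo a b,
        HasDerivAt (fun s => energy L (velCurve c s))
          (∑ i, forceForm L V (velCurve c t) i * deriv (fun s => c s i) t) t := by
    intro a b c hc t ht
    obtain ⟨hne, hd⟩ := hc t ht
    have h1 := ((hE _ hne).hasFDerivAt).comp_hasDerivAt t hd
    rw [part1 _ hne] at h1
    exact h1
  refine ⟨part1, part2, ?_, ?_⟩
  · -- energy non-increasing along all evolution curves → dissipative
    intro hmono p hp
    obtain ⟨ε, hε, γ, hγ0, hγ⟩ := peano_TP hopen hp hScont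
    set c : ℝ → Fin n → ℝ := fun t => (γ t).1 with hcdef
    have hvc : ∀ t ∈ Set.Ioo (-ε) ε, velCurve c t = γ t := by
      intro t ht
      obtain ⟨hmem, hd⟩ := hγ t ht
      have hdc : ∀ i, HasDerivAt (fun s => c s i) ((γ t).2 i) t := by
        intro i
        have hder : HasDerivAt (fun s => (γ s).1 i) ((S (γ t)).1 i) t :=
          (((ContinuousLinearMap.proj i).comp
            (ContinuousLinearMap.fst ℝ (Fin n → ℝ) (Fin n → ℝ))).hasFDerivAt).comp_hasDerivAt t hd
        rw [hSspray (γ t)] at hder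
        exact hder
      show (c t, fun i => deriv (fun s => c s i) t) = γ t
      refine Prod.ext rfl ?_
      funext i
      exact (hdc i).deriv
    have hhyp : ∀ t ∈ Set.Ioo (-ε) ε,
        (velCurve c t).2 ≠ 0 ∧ HasDerivAt (velCurve c) (S (velCurve c t)) t := by
      intro t ht
      obtain ⟨hmem, hd⟩ := hγ t ht
      constructor
      · rw [hvc t ht]; exact hmem
      · have heq : velCurve c =ᶠ[nhds t] γ := by
          filter_upwards [Ioo_mem_nhds ht.1 ht.2] with s hs
          exact hvc s hs
        have : HasDerivAt (velCurve c) (S (γ t)) t := hd.congr_of_eventuallyEq heq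
        rw [hvc t ht]
        exact this
    have h0mem : (0:ℝ) ∈ Set.Ioo (-ε) ε := ⟨by linarith, hε⟩
    have hAnti := hmono (-ε) ε c hhyp
    have hder := part2 (-ε) ε c hhyp 0 h0mem
    have hle := deriv_nonpos_of_antitoneOn h0mem hAnti hder
    have hle' : ∑ i, forceForm L V (velCurve c 0) i * (velCurve c 0).2 i ≤ 0 := hle
    have h0 : velCurve c 0 = p := by rw [hvc 0 h0mem, hγ0]
    rw [h0] at hle'
    exact hle'
  · -- dissipative → energy non-increasing along all evolution curves
    intro hdiss a b c hc
    refine antitoneOn_of_deriv_nonpos (convex_Ioo a b) ?_ ?_ ?_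
    · intro t ht
      exact (part2 a b c hc t ht).continuousAt.continuousWithinAt
    · rw [interior_Ioo]
      intro t ht
      exact ((part2 a b c hc t ht).differentiableAt).differentiableWithinAt
    · rw [interior_Ioo]
      intro t ht
      rw [(part2 a b c hc t ht).deriv]
      exact hdiss (velCurve c t) (hc t ht).1
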